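/- Let m ≥ 2 and let α₀,...,α_{m-1} be nonnegative reals summing to 1 with α_{m-1} > 0. Then the characteristic polynomial p(x) = x^m - α_{m-1} x^{m-1} - ... - α₁ x - α₀ has 1 as a simple root, and every other complex root of p has modulus strictly less than 1. -/

import Mathlib

open Polynomial

theorem stmt_5 (m : ℕ) (hm : 2 ≤ m) (α : ℕ → ℝ)
    (hα : ∀ i, i < m → 0 ≤ α i) (hsum : ∑ i ∈ Finset.range m, α i = 1)
    (hlast : 0 < α (m - 1))
    (p : Polynomial ℝ)
    (hp : p = X ^ m - ∑ i ∈ Finset.range m, C (α i) * X ^ i) :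
    p.IsRoot 1 ∧ p.rootMultiplicity 1 = 1 ∧
      (∀ z : ℂ, (p.map (algebraMap ℝ ℂ)).IsRoot z → z ≠ 1 → ‖z‖ < 1) := by
  have hm1 : 0 < m := by omega
  have hroot1 : p.IsRoot 1 := by
    simp [hp, IsRoot, eval_finset_sum, hsum]
  refine ⟨hroot1, ?_, ?_⟩
  · -- multiplicity
    have hp0 : p ≠ 0 := by
      intro h
      have hc : p.coeff m = 0 := by rw [h]; simp
      rw [hp, coeff_sub, coeff_X_pow, finset_sum_coeff] at hc
      rw [Finset.sum_eq_zero (fun i hi => by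
        simp [coeff_C_mul, coeff_X_pow, (Finset.mem_range.mp hi).ne'] )] at hc
      simp at hc
    have hd : eval 1 (derivative p) = (m : ℝ) - ∑ i ∈ Finset.range m, α i * i := by
      rw [hp]
      simp [derivative_sub, derivative_X_pow, eval_finset_sum]
    have hdpos : 0 < eval 1 (derivative p) := by
      rw [hd]
      have : ∑ i ∈ Finset.range m, α i * i ≤ ∑ i ∈ Finset.range m, α i * (m - 1 : ℝ) := by
        apply Finset.sum_le_sum
        intro i hi
        have hi' := Finset.mem_range.mp hi
        have : (i : ℝ) ≤ (m : ℝ) - 1 := by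
          have : (i : ℝ) ≤ (m : ℝ) - 1 ↔ (i:ℝ) + 1 ≤ m := by constructor <;> intro <;> linarith
          rw [this]; exact_mod_cast hi'
        exact mul_le_mul_of_nonneg_left this (hα i hi')
      rw [← Finset.sum_mul, hsum] at this
      have hm2 : (2:ℝ) ≤ m := by exact_mod_cast hm
      linarith
    have hd0 : (derivative p).rootMultiplicity 1 = 0 :=
      rootMultiplicity_eq_zero (by simp [IsRoot, hdpos.ne'])
    have h1 : (derivative p).rootMultiplicity 1 = p.rootMultiplicity 1 - 1 :=
      derivative_rootMultiplicity_of_root hroot1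
    have h2 : 0 < p.rootMultiplicity 1 := (rootMultiplicity_pos hp0).mpr hroot1
    omega
  · intro z hz hz1
    -- root equation
    have heq : z ^ m = ∑ i ∈ Finset.range m, (α i : ℂ) * z ^ i := by
      have := hz
      rw [IsRoot, eval_map, hp] at this
      simp [eval₂_finset_sum] at this
      linear_combination this
    set r := ‖z‖ with hr
    have hrn : 0 ≤ r := norm_nonneg z
    have hrle : r ≤ 1 := by
      by_contra h
      push_neg at h
      have hb : r ^ m ≤ ∑ i ∈ Finset.range m, α i * r ^ i := by
        calc r ^ m = ‖z ^ m‖ := by rw [norm_pow]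
        _ = ‖∑ i ∈ Finset.range m, (α i : ℂ) * z ^ i‖ := by rw [heq]
        _ ≤ ∑ i ∈ Finset.range m, ‖(α i : ℂ) * z ^ i‖ :=
            norm_sum_le _ _
        _ = ∑ i ∈ Finset.range m, α i * r ^ i := by
            apply Finset.sum_congr rfl
            intro i hi
            rw [norm_mul, norm_pow,
              Complex.norm_of_nonneg (hα i (Finset.mem_range.mp hi))]
      have hb2 : ∑ i ∈ Finset.range m, α i * r ^ i ≤ r ^ (m - 1) := by
        calc ∑ i ∈ Finset.range m, α i * r ^ i
            ≤ ∑ i ∈ Finset.range m, α i * r ^ (m - 1) := by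
              apply Finset.sum_le_sum
              intro i hi
              have hi' := Finset.mem_range.mp hi
              exact mul_le_mul_of_nonneg_left
                (pow_le_pow_right₀ (le_of_lt h) (by omega : i ≤ m - 1))
                (hα i hi')
        _ = r ^ (m - 1) := by rw [← Finset.sum_mul, hsum, one_mul]
      have : r ^ (m - 1) < r ^ m := pow_lt_pow_right₀ h (by omega)
      linarith
    rcases lt_or_eq_of_le hrle with h | h
    · exact h
    · exfalso
      -- |z| = 1 case
      have hzz : z * (starRingEnd ℂ) z = 1 := by
        rw [Complex.mul_conj]
        norm_cast
        rw [Complex.normSq_eq_norm_sq, ← hr, h, one_pow]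
      have hkey : (1 : ℂ) = ∑ i ∈ Finset.range m, (α i : ℂ) * (z ^ i * ((starRingEnd ℂ) z) ^ m) := by
        calc (1 : ℂ) = (z * (starRingEnd ℂ) z) ^ m := by rw [hzz, one_pow]
        _ = z ^ m * ((starRingEnd ℂ) z) ^ m := by ring
        _ = (∑ i ∈ Finset.range m, (α i : ℂ) * z ^ i) * ((starRingEnd ℂ) z) ^ m := by rw [heq]
        _ = _ := by rw [Finset.sum_mul]; apply Finset.sum_congr rfl; intros; ring
      have hre : (1 : ℝ) = ∑ i ∈ Finset.range m, α i * (z ^ i * ((starRingEnd ℂ) z) ^ m).re := by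
        have := congrArg Complex.re hkey
        simpa [Complex.re_sum, Complex.re_ofReal_mul] using this
      have hterm : ∀ i ∈ Finset.range m,
          0 ≤ α i - α i * (z ^ i * ((starRingEnd ℂ) z) ^ m).re := by
        intro i hi
        have hre_le : (z ^ i * ((starRingEnd ℂ) z) ^ m).re ≤ 1 := by
          calc (z ^ i * ((starRingEnd ℂ) z) ^ m).re
              ≤ ‖z ^ i * ((starRingEnd ℂ) z) ^ m‖ := Complex.re_le_norm _
          _ = r ^ i * r ^ m := by
              rw [norm_mul, norm_pow, norm_pow, Complex.norm_conj]
          _ = 1 := by rw [h]; simp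
        nlinarith [hα i (Finset.mem_range.mp hi)]
      have hsum0 : ∑ i ∈ Finset.range m,
          (α i - α i * (z ^ i * ((starRingEnd ℂ) z) ^ m).re) = 0 := by
        rw [Finset.sum_sub_distrib, hsum, ← hre, sub_self]
      have hall := (Finset.sum_eq_zero_iff_of_nonneg hterm).mp hsum0
      have hmem : m - 1 ∈ Finset.range m := Finset.mem_range.mpr (by omega)
      have hlastterm := hall (m - 1) hmem
      have hre1 : (z ^ (m - 1) * ((starRingEnd ℂ) z) ^ m).re = 1 := by
        by_contra hc
        have : α (m - 1) * (1 - (z ^ (m - 1) * ((starRingEnd ℂ) z) ^ m).re) ≠ 0 := by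
          apply mul_ne_zero hlast.ne'
          intro hh
          apply hc
          linarith
        apply this
        linarith [hlastterm]
      have hsimp : z ^ (m - 1) * ((starRingEnd ℂ) z) ^ m = (starRingEnd ℂ) z := by
        obtain ⟨k, hk⟩ : ∃ k, m = k + 1 := ⟨m - 1, by omega⟩
        rw [hk, Nat.add_sub_cancel, pow_succ, ← mul_assoc, ← mul_pow, hzz,
          one_pow, one_mul]
      rw [hsimp] at hre1
      have hzre : z.re = 1 := by
        simpa [Complex.conj_re] using hre1
      have hnsq : z.re ^ 2 + z.im ^ 2 = 1 := by
        have : Complex.normSq z = 1 := by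
          rw [Complex.normSq_eq_norm_sq, ← hr, h, one_pow]
        rw [Complex.normSq_apply] at this
        nlinarith [this]
      have hzim : z.im = 0 := by nlinarith
      exact hz1 (Complex.ext (by simp [hzre]) (by simp [hzim]))
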